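/- The frame F of a finite set A ⊆ ℝ^m is the unique minimal subset of A generating the same VRS hull: for every S ⊆ A, vrs(S) = vrs(A) if and only if F ⊆ S. -/

import Mathlib

open scoped Classical
open Finset

noncomputable section

/-- The VRS (free-disposal convex) hull of a finite set of points in ℝ^m. -/
def vrs {m : ℕ} (S : Finset (Fin m → ℝ)) : Set (Fin m → ℝ) :=
  {z | ∃ l : (Fin m → ℝ) → ℝ, (∀ a, 0 ≤ l a) ∧ (∑ a ∈ S, l a) = 1 ∧
    ∀ k, z k ≤ ∑ a ∈ S, l a * a k}

/-- The frame of `A`: the points of `A` that are extreme points of `vrs A`. -/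
def frame {m : ℕ} (A : Finset (Fin m → ℝ)) : Finset (Fin m → ℝ) :=
  A.filter fun a => a ∈ Set.extremePoints ℝ (vrs A)

lemma mem_vrs_self {m : ℕ} {S : Finset (Fin m → ℝ)} {a : Fin m → ℝ} (ha : a ∈ S) :
    a ∈ vrs S := by
  refine ⟨fun b => if b = a then 1 else 0, fun b => by positivity, ?_, fun k => ?_⟩
  · simp [Finset.sum_ite_eq', ha]
  · simp [ite_mul, Finset.sum_ite_eq', ha]

lemma vrs_subset_trans {m : ℕ} {S T : Finset (Fin m → ℝ)}
    (h : ∀ a ∈ S, a ∈ vrs T) : vrs S ⊆ vrs T := by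
  intro z ⟨l, hl0, hl1, hlz⟩
  choose! g hg0 hg1 hg2 using h
  refine ⟨fun b => ∑ a ∈ S, l a * g a b, fun b => Finset.sum_nonneg fun a ha =>
    mul_nonneg (hl0 a) (hg0 a ha b), ?_, fun k => ?_⟩
  · rw [Finset.sum_comm]
    calc ∑ a ∈ S, ∑ b ∈ T, l a * g a b
        = ∑ a ∈ S, l a * ∑ b ∈ T, g a b := by
          simp [Finset.mul_sum]
      _ = 1 := by
          rw [← hl1]; exact Finset.sum_congr rfl fun a ha => by rw [hg1 a ha, mul_one]
  · calc z k ≤ ∑ a ∈ S, l a * a k := hlz k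
      _ ≤ ∑ a ∈ S, l a * ∑ b ∈ T, g a b * b k := by
          gcongr with a ha
          · exact hl0 a
          · exact hg2 a ha k
      _ = ∑ b ∈ T, (∑ a ∈ S, l a * g a b) * b k := by
          simp_rw [Finset.mul_sum, Finset.sum_mul, mul_assoc]
          exact Finset.sum_comm

lemma vrs_mono {m : ℕ} {S T : Finset (Fin m → ℝ)} (h : S ⊆ T) : vrs S ⊆ vrs T :=
  vrs_subset_trans fun a ha => mem_vrs_self (h ha)

lemma vrs_convex {m : ℕ} (S : Finset (Fin m → ℝ)) : Convex ℝ (vrs S) := by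
  rintro x ⟨l₁, hl₁0, hl₁1, hl₁⟩ y ⟨l₂, hl₂0, hl₂1, hl₂⟩ t s ht hs hts
  refine ⟨fun b => t * l₁ b + s * l₂ b,
    fun b => add_nonneg (mul_nonneg ht (hl₁0 b)) (mul_nonneg hs (hl₂0 b)), ?_, fun k => ?_⟩
  · rw [Finset.sum_add_distrib, ← Finset.mul_sum, ← Finset.mul_sum, hl₁1, hl₂1]
    linarith
  · have : (t • x + s • y) k = t * x k + s * y k := by simp
    rw [this]
    calc t * x k + s * y k
        ≤ t * (∑ a ∈ S, l₁ a * a k) + s * (∑ a ∈ S, l₂ a * a k) := by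
          gcongr
          · exact hl₁ k
          · exact hl₂ k
      _ = ∑ a ∈ S, (t * l₁ a + s * l₂ a) * a k := by
          rw [Finset.mul_sum, Finset.mul_sum, ← Finset.sum_add_distrib]
          congr 1; ext a; ring

lemma convexHull_subset_vrs {m : ℕ} (S : Finset (Fin m → ℝ)) :
    convexHull ℝ (S : Set (Fin m → ℝ)) ⊆ vrs S :=
  convexHull_min (fun a ha => mem_vrs_self (by exact_mod_cast ha)) (vrs_convex S)

example : True := trivial

lemma mem_of_extreme {m : ℕ} {S : Finset (Fin m → ℝ)} {a : Fin m → ℝ}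
    (hex : a ∈ Set.extremePoints ℝ (vrs S)) : a ∈ (S : Set (Fin m → ℝ)) := by
  obtain ⟨l, hl0, hl1, hlz⟩ := hex.1
  set y : Fin m → ℝ := fun k => ∑ b ∈ S, l b * b k with hy_def
  have hy : y ∈ vrs S := ⟨l, hl0, hl1, fun k => le_refl _⟩
  have hx₁ : (fun k => 2 * a k - y k) ∈ vrs S :=
    ⟨l, hl0, hl1, fun k => by have := hlz k; simp only [hy_def]; linarith⟩
  have hseg : a ∈ openSegment ℝ (fun k => 2 * a k - y k) y := by
    refine ⟨1/2, 1/2, by norm_num, by norm_num, by norm_num, ?_⟩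
    funext k
    simp only [Pi.add_apply, Pi.smul_apply, smul_eq_mul]
    ring
  have hya : y = a := hex.2 hy hx₁ (by rw [openSegment_symm]; exact hseg)
  have hconv : a ∈ convexHull ℝ (S : Set (Fin m → ℝ)) := by
    have hmem := S.centerMass_mem_convexHull (w := l) (z := id)
      (fun b _ => hl0 b) (by rw [hl1]; norm_num) (fun b hb => Finset.mem_coe.2 hb)
    have : S.centerMass l id = a := by
      funext k
      rw [← hya]
      simp [Finset.centerMass, hl1, Finset.sum_apply, hy_def]
    rwa [this] at hmem
  exact extremePoints_convexHull_subset
    (inter_extremePoints_subset_extremePoints_of_subset (convexHull_subset_vrs S)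
      ⟨hconv, hex⟩)

lemma mem_vrs_erase {m : ℕ} {A : Finset (Fin m → ℝ)} {a : Fin m → ℝ}
    (haA : a ∈ A) (hnex : a ∉ Set.extremePoints ℝ (vrs A)) : a ∈ vrs (A.erase a) := by
  rw [mem_extremePoints] at hnex
  push_neg at hnex
  obtain ⟨x₁, hx₁, x₂, hx₂, hseg, hne'⟩ := hnex (mem_vrs_self haA)
  obtain ⟨t, s, ht, hs, hts, heq⟩ := hseg
  obtain ⟨l₁, hl₁0, hl₁1, hl₁⟩ := hx₁
  obtain ⟨l₂, hl₂0, hl₂1, hl₂⟩ := hx₂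
  set μ : (Fin m → ℝ) → ℝ := fun b => t * l₁ b + s * l₂ b with hμ_def
  have hμ0 : ∀ b, 0 ≤ μ b := fun b =>
    add_nonneg (mul_nonneg ht.le (hl₁0 b)) (mul_nonneg hs.le (hl₂0 b))
  have hμ1 : ∑ b ∈ A, μ b = 1 := by
    simp only [hμ_def, Finset.sum_add_distrib, ← Finset.mul_sum, hl₁1, hl₂1]
    linarith
  have hka : ∀ k, a k ≤ ∑ b ∈ A, μ b * b k := by
    intro k
    have hak : a k = t * x₁ k + s * x₂ k := by
      have := congrFun heq k
      simp only [Pi.add_apply, Pi.smul_apply, smul_eq_mul] at this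
      linarith
    calc a k = t * x₁ k + s * x₂ k := hak
      _ ≤ t * (∑ b ∈ A, l₁ b * b k) + s * (∑ b ∈ A, l₂ b * b k) := by
          gcongr
          · exact hl₁ k
          · exact hl₂ k
      _ = ∑ b ∈ A, μ b * b k := by
          simp only [hμ_def, Finset.mul_sum, ← Finset.sum_add_distrib]
          congr 1; ext b; ring
  by_cases hc : μ a < 1
  · set d := 1 - μ a with hd_def
    have hd0 : 0 < d := by simp only [hd_def]; linarith
    have hsum_erase : ∑ b ∈ A.erase a, μ b = d := by
      have := Finset.add_sum_erase A μ haA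
      simp only [hd_def]; linarith
    refine ⟨fun b => μ b / d, fun b => div_nonneg (hμ0 b) hd0.le, ?_, fun k => ?_⟩
    · rw [← Finset.sum_div, hsum_erase, div_self hd0.ne']
    · have h1 := hka k
      rw [← Finset.add_sum_erase A (fun b => μ b * b k) haA] at h1
      simp only [div_mul_eq_mul_div, ← Finset.sum_div]
      rw [le_div_iff₀ hd0]
      simp only [hd_def]
      nlinarith [h1]
  · have hle : μ a ≤ 1 := by
      rw [← hμ1]; exact Finset.single_le_sum (fun b _ => hμ0 b) haA
    have hca : μ a = 1 := le_antisymm hle (not_lt.1 hc)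
    have hze : ∑ b ∈ A.erase a, μ b = 0 := by
      have := Finset.add_sum_erase A μ haA; linarith
    have hz : ∀ b ∈ A.erase a, μ b = 0 :=
      (Finset.sum_eq_zero_iff_of_nonneg (fun b _ => hμ0 b)).1 hze
    have hl₁z : ∀ b ∈ A.erase a, l₁ b = 0 := by
      intro b hb
      have h := hz b hb
      simp only [hμ_def] at h
      nlinarith [hl₁0 b, hl₂0 b, mul_nonneg ht.le (hl₁0 b), mul_nonneg hs.le (hl₂0 b)]
    have hl₂z : ∀ b ∈ A.erase a, l₂ b = 0 := by
      intro b hb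
      have h := hz b hb
      simp only [hμ_def] at h
      nlinarith [hl₁0 b, hl₂0 b, mul_nonneg ht.le (hl₁0 b), mul_nonneg hs.le (hl₂0 b)]
    have hl₁a : l₁ a = 1 := by
      have := Finset.add_sum_erase A l₁ haA
      rw [Finset.sum_eq_zero hl₁z] at this
      linarith
    have hl₂a : l₂ a = 1 := by
      have := Finset.add_sum_erase A l₂ haA
      rw [Finset.sum_eq_zero hl₂z] at this
      linarith
    have hy₁ : ∀ k, x₁ k ≤ a k := by
      intro k
      have h := hl₁ k
      rw [← Finset.add_sum_erase A (fun b => l₁ b * b k) haA,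
        Finset.sum_eq_zero (fun b hb => by rw [hl₁z b hb, zero_mul]), hl₁a] at h
      linarith
    have hy₂ : ∀ k, x₂ k ≤ a k := by
      intro k
      have h := hl₂ k
      rw [← Finset.add_sum_erase A (fun b => l₂ b * b k) haA,
        Finset.sum_eq_zero (fun b hb => by rw [hl₂z b hb, zero_mul]), hl₂a] at h
      linarith
    have hts' : ∀ k, t * a k + s * a k = a k := fun k => by
      rw [← add_mul, hts, one_mul]
    have hx₁a : x₁ = a := by
      funext k
      have heqk := congrFun heq k
      simp only [Pi.add_apply, Pi.smul_apply, smul_eq_mul] at heqk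
      have h2 : s * x₂ k ≤ s * a k := mul_le_mul_of_nonneg_left (hy₂ k) hs.le
      have h3 : t * a k ≤ t * x₁ k := by linarith [hts' k]
      exact le_antisymm (hy₁ k) ((mul_le_mul_iff_right₀ ht).1 h3)
    have hx₂a : x₂ = a := by
      funext k
      have heqk := congrFun heq k
      simp only [Pi.add_apply, Pi.smul_apply, smul_eq_mul] at heqk
      have h1 : t * x₁ k ≤ t * a k := mul_le_mul_of_nonneg_left (hy₁ k) ht.le
      have h3 : s * a k ≤ s * x₂ k := by linarith [hts' k]
      exact le_antisymm (hy₂ k) ((mul_le_mul_iff_right₀ hs).1 h3)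
    exact absurd hx₂a (hne' hx₁a)

lemma mem_vrs_frame {m : ℕ} (A : Finset (Fin m → ℝ)) : ∀ a ∈ A, a ∈ vrs (frame A) := by
  induction A using Finset.strongInduction with
  | _ A ih =>
    intro a haA
    by_cases hext : a ∈ Set.extremePoints ℝ (vrs A)
    · exact mem_vrs_self (Finset.mem_filter.2 ⟨haA, hext⟩)
    · have h1 : a ∈ vrs (A.erase a) := mem_vrs_erase haA hext
      have hsub : A.erase a ⊂ A := Finset.erase_ssubset haA
      have h2 : vrs (A.erase a) = vrs A := by
        apply Set.Subset.antisymm (vrs_mono (Finset.erase_subset a A))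
        apply vrs_subset_trans
        intro b hb
        by_cases hba : b = a
        · subst hba; exact h1
        · exact mem_vrs_self (Finset.mem_erase.2 ⟨hba, hb⟩)
      have h3 : frame (A.erase a) = frame A := by
        simp only [frame, h2]
        rw [Finset.filter_erase,
          Finset.erase_eq_of_notMem (fun hmem => hext (Finset.mem_filter.1 hmem).2)]
      have h4 : vrs (A.erase a) ⊆ vrs (frame (A.erase a)) :=
        vrs_subset_trans (ih _ hsub)
      rw [h3] at h4
      exact h4 h1

theorem stmt3 {m : ℕ} (A S : Finset (Fin m → ℝ)) (hS : S ⊆ A) :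
    vrs S = vrs A ↔ frame A ⊆ S := by
  constructor
  · intro h x hx
    have hx' := Finset.mem_filter.1 hx
    have hxv : x ∈ Set.extremePoints ℝ (vrs S) := by rw [h]; exact hx'.2
    exact Finset.mem_coe.1 (mem_of_extreme hxv)
  · intro hFS
    apply Set.Subset.antisymm (vrs_mono hS)
    apply vrs_subset_trans
    intro a haA
    exact vrs_mono hFS (mem_vrs_frame A a haA)
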